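/- Let d be an even integer and m an integer with 2 ≤ d and d+1 < m, and set a = (d+2)/2. For a subset U ⊆ {1,…,m} let p(U) denote the number of odd contiguous subsets of U. If W ⊆ {1,…,m} satisfies a < #W ≤ d and p(W) > d − #W, then there exists w ∈ W such that p(W ∖ {w}) > d − #W + 1. -/

import Mathlib

/-- The number of odd contiguous subsets of `W ⊆ {1, …, m}`: a contiguous subset of `W` is a
set `{i, i+1, …, j} ⊆ W` with `2 ≤ i ≤ j ≤ m−1`, `i−1 ∉ W`, `j+1 ∉ W`; it is odd contiguous
if its cardinality `j − i + 1` is odd. -/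
def oddContig (m : ℕ) (W : Finset ℕ) : ℕ :=
  ((Finset.Icc 2 (m - 1) ×ˢ Finset.Icc 2 (m - 1)).filter
    (fun p : ℕ × ℕ => p.1 ≤ p.2 ∧ Finset.Icc p.1 p.2 ⊆ W ∧
      p.1 - 1 ∉ W ∧ p.2 + 1 ∉ W ∧ Odd (p.2 - p.1 + 1))).card

def ocSet (m : ℕ) (W : Finset ℕ) : Finset (ℕ × ℕ) :=
  ((Finset.Icc 2 (m - 1) ×ˢ Finset.Icc 2 (m - 1)).filter
    (fun p : ℕ × ℕ => p.1 ≤ p.2 ∧ Finset.Icc p.1 p.2 ⊆ W ∧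
      p.1 - 1 ∉ W ∧ p.2 + 1 ∉ W ∧ Odd (p.2 - p.1 + 1)))

lemma oddContig_def (m : ℕ) (W : Finset ℕ) : oddContig m W = (ocSet m W).card := rfl

lemma mem_ocSet {m : ℕ} {W : Finset ℕ} {a b : ℕ} :
    (a, b) ∈ ocSet m W ↔
      (2 ≤ a ∧ a ≤ m - 1) ∧ (2 ≤ b ∧ b ≤ m - 1) ∧ a ≤ b ∧ Finset.Icc a b ⊆ W ∧
        a - 1 ∉ W ∧ b + 1 ∉ W ∧ Odd (b - a + 1) := by
  simp [ocSet, Finset.mem_filter, Finset.mem_product, Finset.mem_Icc, and_assoc]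

lemma exists_run {m : ℕ} {W : Finset ℕ} (hW : W ⊆ Finset.Icc 1 m) {x : ℕ} (hx : x ∈ W) :
    ∃ i e, i ≤ x ∧ x ≤ e ∧ Finset.Icc i e ⊆ W ∧ i - 1 ∉ W ∧ e + 1 ∉ W := by
  classical
  have h0 : (0 : ℕ) ∉ W := by
    intro h
    have := Finset.mem_Icc.mp (hW h)
    omega
  have hPe : ∃ k, x + k + 1 ∉ W := by
    refine ⟨m, fun h => ?_⟩
    have := Finset.mem_Icc.mp (hW h)
    omega
  have hPi : ∃ j, x - (j + 1) ∉ W := ⟨x, by simpa using h0⟩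
  set ke := Nat.find hPe with hke
  set ji := Nat.find hPi with hji
  refine ⟨x - ji, x + ke, Nat.sub_le _ _, Nat.le_add_right _ _, ?_, ?_, Nat.find_spec hPe⟩
  · intro y hy
    rw [Finset.mem_Icc] at hy
    rcases lt_trichotomy y x with h | rfl | h
    · have hj' : x - y - 1 < ji := by omega
      have hmem : x - (x - y - 1 + 1) ∈ W := not_not.mp (Nat.find_min hPi hj')
      have heq : x - (x - y - 1 + 1) = y := by omega
      rwa [heq] at hmem
    · exact hx
    · have hk' : y - x - 1 < ke := by omega
      have hmem : x + (y - x - 1) + 1 ∈ W := not_not.mp (Nat.find_min hPe hk')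
      have heq : x + (y - x - 1) + 1 = y := by omega
      rwa [heq] at hmem
  · have := Nat.find_spec hPi
    rwa [← Nat.sub_sub] at this

/-- Let `d` be even, `2 ≤ d`, `d + 1 < m`, and `a = (d+2)/2`. If `W ⊆ {1, …, m}` satisfies
`a < #W ≤ d` and the number `p(W)` of odd contiguous subsets of `W` exceeds `d − #W`, then
there is `w ∈ W` with `p(W ∖ {w}) > d − #W + 1`. -/
theorem exists_vertex_removal (d m : ℕ) (hd : Even d) (hd2 : 2 ≤ d) (hm : d + 1 < m)
    (W : Finset ℕ) (hW : W ⊆ Finset.Icc 1 m)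
    (hlow : (d + 2) / 2 < W.card) (hhigh : W.card ≤ d)
    (hp : d - W.card < oddContig m W) :
    ∃ w ∈ W, d - W.card + 1 < oddContig m (W.erase w) := by
  classical
  obtain ⟨k, hk⟩ := hd
  by_cases hadj : ∃ x ∈ W, x + 1 ∈ W
  · obtain ⟨x, hxW, hx1W⟩ := hadj
    obtain ⟨i, e, hix, hxe, hIcc, hiW, heW⟩ := exists_run hW hxW
    have hxm := Finset.mem_Icc.mp (hW hxW)
    have hiW' : i ∈ W := hIcc (Finset.mem_Icc.mpr ⟨le_rfl, le_trans hix hxe⟩)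
    have hi1 : 1 ≤ i := (Finset.mem_Icc.mp (hW hiW')).1
    have heW' : e ∈ W := hIcc (Finset.mem_Icc.mpr ⟨le_trans hix hxe, le_rfl⟩)
    have hem : e ≤ m := (Finset.mem_Icc.mp (hW heW')).2
    have hene : e ≠ x := fun h => heW (h ▸ hx1W)
    have hxe1 : x + 1 ≤ e := by omega
    by_cases hie : i = 1
    · -- Case B : run starts at 1; remove e - 1, new odd run {e}
      subst hie
      have hem1 : e ≤ m - 1 := by
        by_contra h
        have he : e = m := by omega
        rw [he] at hIcc
        have : (Finset.Icc 1 m).card ≤ W.card := Finset.card_le_card hIcc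
        rw [Nat.card_Icc] at this
        omega
      have hwW : e - 1 ∈ W := hIcc (Finset.mem_Icc.mpr ⟨by omega, by omega⟩)
      refine ⟨e - 1, hwW, ?_⟩
      have hnot : (e, e) ∉ ocSet m W := by
        rw [mem_ocSet]
        rintro ⟨-, -, -, -, h, -⟩
        exact h hwW
      have hsub : insert (e, e) (ocSet m W) ⊆ ocSet m (W.erase (e - 1)) := by
        rintro ⟨a, b⟩ hab
        rw [Finset.mem_insert] at hab
        rcases hab with hab | hab
        · rw [hab, mem_ocSet]
          refine ⟨⟨by omega, hem1⟩, ⟨by omega, hem1⟩, le_rfl, ?_, ?_, ?_, ⟨0, by omega⟩⟩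
          · intro z hz
            rw [Finset.mem_Icc] at hz
            have hz' : z = e := by omega
            subst hz'
            exact Finset.mem_erase.mpr ⟨by omega, heW'⟩
          · exact Finset.notMem_erase _ _
          · exact fun h => heW (Finset.mem_of_mem_erase h)
        · rw [mem_ocSet] at hab ⊢
          obtain ⟨hra, hrb, hle, hsubW, ha1, hb1, hodd⟩ := hab
          have hage : e + 2 ≤ a := by
            by_contra h
            exact ha1 (hIcc (Finset.mem_Icc.mpr ⟨by omega, by omega⟩))
          refine ⟨hra, hrb, hle, ?_, ?_, ?_, hodd⟩
          · intro z hz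
            rw [Finset.mem_Icc] at hz
            exact Finset.mem_erase.mpr ⟨by omega, hsubW (Finset.mem_Icc.mpr hz)⟩
          · exact fun h => ha1 (Finset.mem_of_mem_erase h)
          · exact fun h => hb1 (Finset.mem_of_mem_erase h)
      have hcard := Finset.card_le_card hsub
      rw [Finset.card_insert_of_notMem hnot] at hcard
      rw [oddContig_def] at hp ⊢
      omega
    · by_cases hemm : e = m
      · -- Case C : run ends at m, starts at i ≥ 2; remove i + 1, new odd run {i}
        have hi2 : 2 ≤ i := by omega
        have hwW : i + 1 ∈ W := hIcc (Finset.mem_Icc.mpr ⟨by omega, by omega⟩)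
        refine ⟨i + 1, hwW, ?_⟩
        have hnot : (i, i) ∉ ocSet m W := by
          rw [mem_ocSet]
          rintro ⟨-, -, -, -, -, h, -⟩
          exact h hwW
        have hsub : insert (i, i) (ocSet m W) ⊆ ocSet m (W.erase (i + 1)) := by
          rintro ⟨a, b⟩ hab
          rw [Finset.mem_insert] at hab
          rcases hab with hab | hab
          · rw [hab, mem_ocSet]
            refine ⟨⟨hi2, by omega⟩, ⟨hi2, by omega⟩, le_rfl, ?_, ?_, ?_, ⟨0, by omega⟩⟩
            · intro z hz
              rw [Finset.mem_Icc] at hz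
              have hz' : z = i := by omega
              subst hz'
              exact Finset.mem_erase.mpr ⟨by omega, hiW'⟩
            · exact fun h => hiW (Finset.mem_of_mem_erase h)
            · exact Finset.notMem_erase _ _
          · rw [mem_ocSet] at hab ⊢
            obtain ⟨hra, hrb, hle, hsubW, ha1, hb1, hodd⟩ := hab
            have hble : b + 2 ≤ i := by
              by_contra h
              exact hb1 (hIcc (Finset.mem_Icc.mpr ⟨by omega, by omega⟩))
            refine ⟨hra, hrb, hle, ?_, ?_, ?_, hodd⟩
            · intro z hz
              rw [Finset.mem_Icc] at hz
              exact Finset.mem_erase.mpr ⟨by omega, hsubW (Finset.mem_Icc.mpr hz)⟩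
            · exact fun h => ha1 (Finset.mem_of_mem_erase h)
            · exact fun h => hb1 (Finset.mem_of_mem_erase h)
        have hcard := Finset.card_le_card hsub
        rw [Finset.card_insert_of_notMem hnot] at hcard
        rw [oddContig_def] at hp ⊢
        omega
      · -- Case A : interior run [i,e], 2 ≤ i, e ≤ m-1; remove i + 1
        have hi2 : 2 ≤ i := by omega
        have hem1 : e ≤ m - 1 := by omega
        have hwW : i + 1 ∈ W := hIcc (Finset.mem_Icc.mpr ⟨by omega, by omega⟩)
        refine ⟨i + 1, hwW, ?_⟩
        have hkey : ∀ a b : ℕ, (a, b) ∈ ocSet m W → a ≤ i + 1 → i + 1 ≤ b →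
            a = i ∧ b = e := by
          intro a b hab ha hb
          rw [mem_ocSet] at hab
          obtain ⟨hra, hrb, hle, hsubW, ha1, hb1, hodd⟩ := hab
          have hai : i ≤ a := by
            by_contra h
            exact hiW (hsubW (Finset.mem_Icc.mpr ⟨by omega, by omega⟩))
          have hane : a ≠ i + 1 := by
            intro h
            apply ha1
            rw [h, Nat.add_sub_cancel]
            exact hiW'
          have hbe : b ≤ e := by
            by_contra h
            exact heW (hsubW (Finset.mem_Icc.mpr ⟨by omega, by omega⟩))
          have hbe' : e ≤ b := by
            by_contra h
            exact hb1 (hIcc (Finset.mem_Icc.mpr ⟨by omega, by omega⟩))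
          omega
        have hsurvive : ∀ a b : ℕ, (a, b) ∈ ocSet m W → ¬(a = i ∧ b = e) →
            (a, b) ∈ ocSet m (W.erase (i + 1)) := by
          intro a b hab hne
          have hout : b < i + 1 ∨ i + 1 < a := by
            by_contra h
            push_neg at h
            exact hne (hkey a b hab (by omega) (by omega))
          rw [mem_ocSet] at hab ⊢
          obtain ⟨hra, hrb, hle, hsubW, ha1, hb1, hodd⟩ := hab
          refine ⟨hra, hrb, hle, ?_, ?_, ?_, hodd⟩
          · intro z hz
            rw [Finset.mem_Icc] at hz
            exact Finset.mem_erase.mpr ⟨by omega, hsubW (Finset.mem_Icc.mpr hz)⟩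
          · exact fun h => ha1 (Finset.mem_of_mem_erase h)
          · exact fun h => hb1 (Finset.mem_of_mem_erase h)
        have hii : (i, i) ∈ ocSet m (W.erase (i + 1)) := by
          rw [mem_ocSet]
          refine ⟨⟨hi2, by omega⟩, ⟨hi2, by omega⟩, le_rfl, ?_, ?_, ?_, ⟨0, by omega⟩⟩
          · intro z hz
            rw [Finset.mem_Icc] at hz
            have hz' : z = i := by omega
            subst hz'
            exact Finset.mem_erase.mpr ⟨by omega, hiW'⟩
          · exact fun h => hiW (Finset.mem_of_mem_erase h)
          · exact Finset.notMem_erase _ _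
        have hiinotW : (i, i) ∉ ocSet m W := by
          rw [mem_ocSet]
          rintro ⟨-, -, -, -, -, h, -⟩
          exact h hwW
        by_cases hodd : Odd (e - i + 1)
        · -- odd run: lose (i,e), gain (i,i) and (i+2,e)
          have hie2 : i + 2 ≤ e := by
            obtain ⟨t, ht⟩ := hodd
            omega
          have hiem : (i, e) ∈ ocSet m W := by
            rw [mem_ocSet]
            exact ⟨⟨hi2, by omega⟩, ⟨by omega, hem1⟩, by omega, hIcc, hiW, heW, hodd⟩
          have hi2e : (i + 2, e) ∈ ocSet m (W.erase (i + 1)) := by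
            rw [mem_ocSet]
            refine ⟨⟨by omega, by omega⟩, ⟨by omega, hem1⟩, by omega, ?_, ?_, ?_, ?_⟩
            · intro z hz
              rw [Finset.mem_Icc] at hz
              exact Finset.mem_erase.mpr ⟨by omega,
                hIcc (Finset.mem_Icc.mpr ⟨by omega, by omega⟩)⟩
            · have h21 : i + 2 - 1 = i + 1 := by omega
              rw [h21]
              exact Finset.notMem_erase _ _
            · exact fun h => heW (Finset.mem_of_mem_erase h)
            · obtain ⟨t, ht⟩ := hodd
              exact ⟨t - 1, by omega⟩
          have hi2enotW : (i + 2, e) ∉ ocSet m W := by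
            rw [mem_ocSet]
            rintro ⟨-, -, -, -, h, -⟩
            apply h
            have h21 : i + 2 - 1 = i + 1 := by omega
            rw [h21]
            exact hwW
          have hsub : insert (i, i) (insert (i + 2, e) ((ocSet m W).erase (i, e)))
              ⊆ ocSet m (W.erase (i + 1)) := by
            rintro ⟨a, b⟩ hab
            rw [Finset.mem_insert, Finset.mem_insert] at hab
            rcases hab with hab | hab | hab
            · rw [Prod.mk.injEq] at hab
              obtain ⟨rfl, rfl⟩ := hab
              exact hii
            · rw [Prod.mk.injEq] at hab
              obtain ⟨rfl, rfl⟩ := hab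
              exact hi2e
            · rw [Finset.mem_erase] at hab
              obtain ⟨hne', hab⟩ := hab
              refine hsurvive a b hab ?_
              rintro ⟨rfl, rfl⟩
              exact hne' rfl
          have hcard := Finset.card_le_card hsub
          have hn1 : (i + 2, e) ∉ (ocSet m W).erase (i, e) :=
            fun h => hi2enotW (Finset.mem_of_mem_erase h)
          have hn2 : (i, i) ∉ insert (i + 2, e) ((ocSet m W).erase (i, e)) := by
            rw [Finset.mem_insert]
            rintro (h | h)
            · rw [Prod.mk.injEq] at h
              omega
            · exact hiinotW (Finset.mem_of_mem_erase h)
          rw [Finset.card_insert_of_notMem hn2, Finset.card_insert_of_notMem hn1,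
            Finset.card_erase_of_mem hiem] at hcard
          have hpos : 1 ≤ (ocSet m W).card := Finset.card_pos.mpr ⟨_, hiem⟩
          rw [oddContig_def] at hp ⊢
          omega
        · -- even run: gain (i,i), nothing lost
          have hsub : insert (i, i) (ocSet m W) ⊆ ocSet m (W.erase (i + 1)) := by
            rintro ⟨a, b⟩ hab
            rw [Finset.mem_insert] at hab
            rcases hab with hab | hab
            · rw [Prod.mk.injEq] at hab
              obtain ⟨rfl, rfl⟩ := hab
              exact hii
            · refine hsurvive a b hab ?_
              rintro ⟨rfl, rfl⟩
              rw [mem_ocSet] at hab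
              exact hodd hab.2.2.2.2.2.2
          have hcard := Finset.card_le_card hsub
          rw [Finset.card_insert_of_notMem hiinotW] at hcard
          rw [oddContig_def] at hp ⊢
          omega
  · push_neg at hadj
    have key : ∀ w ∈ W, (w = 1 ∨ 1 ∉ W) → d - W.card + 1 < oddContig m (W.erase w) := by
      intro w hwW h1
      set T := (W.erase w).filter (fun y => 2 ≤ y ∧ y ≤ m - 1) with hT
      have hmap : T.card ≤ oddContig m (W.erase w) := by
        rw [oddContig_def]
        apply Finset.card_le_card_of_injOn (fun y => (y, y))
        · intro y hy
          rw [hT, Finset.mem_coe, Finset.mem_filter] at hy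
          obtain ⟨hyE, hy2, hym⟩ := hy
          have hyW := Finset.mem_of_mem_erase hyE
          rw [Finset.mem_coe, mem_ocSet]
          refine ⟨⟨hy2, hym⟩, ⟨hy2, hym⟩, le_rfl, ?_, ?_, ?_, ⟨0, by omega⟩⟩
          · intro z hz
            rw [Finset.mem_Icc] at hz
            have : z = y := by omega
            exact this ▸ hyE
          · intro h
            have h' := Finset.mem_of_mem_erase h
            have := hadj (y - 1) h'
            rw [Nat.sub_add_cancel (by omega)] at this
            exact this hyW
          · intro h
            exact hadj y hyW (Finset.mem_of_mem_erase h)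
        · intro a _ b _ h
          simpa using congrArg Prod.fst h
      have hTcard : W.card - 2 ≤ T.card := by
        have hsub : W.erase w ⊆ insert m T := by
          intro y hy
          have hyW := Finset.mem_of_mem_erase hy
          have hy1m := Finset.mem_Icc.mp (hW hyW)
          by_cases hy2 : 2 ≤ y ∧ y ≤ m - 1
          · exact Finset.mem_insert_of_mem (Finset.mem_filter.mpr ⟨hy, hy2⟩)
          · have hym : y = 1 ∨ y = m := by omega
            rcases hym with rfl | rfl
            · exfalso
              rcases h1 with rfl | h1
              · exact (Finset.mem_erase.mp hy).1 rfl
              · exact h1 hyW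
            · exact Finset.mem_insert_self _ _
        have h1' := Finset.card_le_card hsub
        have h2' := Finset.card_insert_le m T
        have h3' := Finset.card_erase_of_mem hwW
        omega
      omega
    by_cases h1 : 1 ∈ W
    · exact ⟨1, h1, key 1 h1 (Or.inl rfl)⟩
    · have hne : W.Nonempty := Finset.card_pos.mp (by omega)
      obtain ⟨w, hw⟩ := hne
      exact ⟨w, hw, key w hw (Or.inr h1)⟩
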